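/- Let f : F_2^k → S be a non-constant function and t ≥ 1. Then the optimal redundancy satisfies r^f_ID(k, t) ≥ t. -/
import Mathlib


/-- Length of a longest common subsequence of two binary words. -/
noncomputable def lcsLen (x y : List Bool) : ℕ :=
  sSup {n | ∃ z : List Bool, z.length = n ∧ z.Sublist x ∧ z.Sublist y}

/-- The insdel distance `d_ID(x,y) = |x| + |y| - 2·LCS(x,y)`. -/
noncomputable def dID (x y : List Bool) : ℕ :=
  x.length + y.length - 2 * lcsLen x y

/-- Number of runs (maximal blocks of consecutive equal symbols) of a binary word. -/
def runs (x : List Bool) : ℕ := (x.destutter (· ≠ ·)).length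

/-- Maximum run length of a binary word: the largest `n` such that some constant
word of length `n` occurs as a block of consecutive symbols of `x`. -/
noncomputable def maxRun (x : List Bool) : ℕ :=
  sSup {n | ∃ b : Bool, (List.replicate n b).IsInfix x}

/-- `D_t(x)`: the words of length `|x| - t` that are subsequences of `x`. -/
def Dset (t : ℕ) (x : List Bool) : Set (List Bool) :=
  {z | z.length = x.length - t ∧ z.Sublist x}

/-- `I_t(x)`: the words of length `|x| + t` that are supersequences of `x`. -/
def Iset (t : ℕ) (x : List Bool) : Set (List Bool) :=
  {z | z.length = x.length + t ∧ x.Sublist z}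

/-- A systematic encoding `x ↦ (x, p(x))` with redundancy words `p x` of length `r`
is a function-correcting insdel code for `f` correcting `t` insdel errors. -/
noncomputable def IsFCIDC {k : ℕ} {S : Type*} (f : (Fin k → Bool) → S) (t r : ℕ)
    (p : (Fin k → Bool) → List Bool) : Prop :=
  (∀ x, (p x).length = r) ∧
  ∀ x y, f x ≠ f y → 2 * t < dID (List.ofFn x ++ p x) (List.ofFn y ++ p y)

/-- The optimal redundancy `r^f_ID(k,t)`. -/
noncomputable def optRed {k : ℕ} {S : Type*} (f : (Fin k → Bool) → S) (t : ℕ) : ℕ :=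
  sInf {r | ∃ p, IsFCIDC f t r p}

/-- `p` is an irregular insdel-distance code of length `r` for the matrix `I`. -/
noncomputable def IsIrregularCode {M : ℕ} (I : Fin M → Fin M → ℕ) (r : ℕ)
    (p : Fin M → List Bool) : Prop :=
  (∀ i, (p i).length = r) ∧ ∀ i j, I i j ≤ dID (p i) (p j)

/-- `N^(1)_ID(I)`: least length of an irregular insdel-distance code for `I`. -/
noncomputable def N1 {M : ℕ} (I : Fin M → Fin M → ℕ) : ℕ :=
  sInf {r | ∃ p, IsIrregularCode I r p}

/-- `N^(2)_ID(I; K)`: least length `r ≥ K` of an irregular insdel-distance code for `I`. -/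
noncomputable def N2 {M : ℕ} (I : Fin M → Fin M → ℕ) (K : ℕ) : ℕ :=
  sInf {r | K ≤ r ∧ ∃ p, IsIrregularCode I r p}

-- The insdel distance matrix `I_f^(1)(t, x₁, …, x_M)`.
open Classical in
noncomputable def Imat1 {k M : ℕ} {S : Type*} (f : (Fin k → Bool) → S) (t : ℕ)
    (x : Fin M → Fin k → Bool) : Fin M → Fin M → ℕ :=
  fun i j => if f (x i) ≠ f (x j) then
    2 * t + 2 - dID (List.ofFn (x i)) (List.ofFn (x j)) else 0

-- The insdel distance matrix `I_f^(2)(t, x₁, …, x_M)`.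
open Classical in
noncomputable def Imat2 {k M : ℕ} {S : Type*} (f : (Fin k → Bool) → S) (t : ℕ)
    (x : Fin M → Fin k → Bool) : Fin M → Fin M → ℕ :=
  fun i j => if f (x i) ≠ f (x j) then
    2 * t + 2 + 2 * k - dID (List.ofFn (x i)) (List.ofFn (x j)) else 0

/-- The function distance `d^f_ID(a,b)`. -/
noncomputable def dfID {k : ℕ} {S : Type*} (f : (Fin k → Bool) → S) (a b : S) : ℕ :=
  sInf {d | ∃ x y : Fin k → Bool, f x = a ∧ f y = b ∧ dID (List.ofFn x) (List.ofFn y) = d}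

/-- The function distance matrix `I_f^(2)(t, f₁, …, f_E)`, with entries
`max(2(t+1+k) − d^f_ID(f_i, f_j), 0)` off the diagonal and `0` on the diagonal. -/
noncomputable def funMat2 {k E : ℕ} {S : Type*} (f : (Fin k → Bool) → S) (t : ℕ)
    (fs : Fin E → S) : Fin E → Fin E → ℕ :=
  fun i j => if i = j then 0 else 2 * (t + 1 + k) - dfID f (fs i) (fs j)

/-- The uniform `M × M` matrix with off-diagonal entries `d` and zero diagonal. -/
def uniMat (M d : ℕ) : Fin M → Fin M → ℕ := fun i j => if i = j then 0 else d

/-- The number-of-runs function on `F_2^k`. -/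
def runsFn (k : ℕ) (x : Fin k → Bool) : ℕ := runs (List.ofFn x)

/-- The VT-syndrome function `f(x) = Σ_{j=1}^k j·x_j mod (k+1)`. -/
def vtFn (k : ℕ) (x : Fin k → Bool) : ℕ :=
  (∑ j : Fin k, ((j : ℕ) + 1) * (if x j then 1 else 0)) % (k + 1)

/-- The function ball `B^f_ID(u, ρ) = f(B_ID(u, ρ))`. -/
def fball {k : ℕ} {S : Type*} (f : (Fin k → Bool) → S) (u : Fin k → Bool) (ρ : ℕ) : Set S :=
  f '' {v : Fin k → Bool | dID (List.ofFn u) (List.ofFn v) ≤ ρ}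

/-- `V_ID(r, d)`: the maximum size of an insdel ball of (integer) radius `d`
among centers in `F_2^r`. -/
noncomputable def Vid (r : ℕ) (d : ℤ) : ℕ :=
  sSup (Set.range fun x : Fin r → Bool =>
    Nat.card {y : Fin r → Bool | (dID (List.ofFn x) (List.ofFn y) : ℤ) ≤ d})

-- auxiliary lemmas

lemma lcs_bddAbove (x y : List Bool) :
    BddAbove {n | ∃ z : List Bool, z.length = n ∧ z.Sublist x ∧ z.Sublist y} := by
  refine BddAbove.mono ?_ (bddAbove_Iic (a := x.length))
  rintro n ⟨z, hl, hzx, _⟩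
  simpa [Set.mem_Iic, ← hl] using hzx.length_le

lemma le_lcsLen {x y z : List Bool} (hx : z.Sublist x) (hy : z.Sublist y) :
    z.length ≤ lcsLen x y :=
  le_csSup (lcs_bddAbove x y) ⟨z, rfl, hx, hy⟩

lemma lcsLen_le {x y : List Bool} {n : ℕ}
    (h : ∀ z : List Bool, z.Sublist x → z.Sublist y → z.length ≤ n) :
    lcsLen x y ≤ n := by
  have hne : {n | ∃ z : List Bool, z.length = n ∧ z.Sublist x ∧ z.Sublist y}.Nonempty :=
    ⟨0, [], rfl, List.nil_sublist _, List.nil_sublist _⟩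
  apply csSup_le hne
  rintro m ⟨z, hl, hzx, hzy⟩
  exact hl ▸ h z hzx hzy

lemma bool_length_count (l : List Bool) : l.length = l.count true + l.count false := by
  induction l with
  | nil => simp
  | cons a l ih =>
    cases a <;>
      simp only [List.length_cons, List.count_cons, ih, beq_iff_eq, reduceIte,
        Bool.true_eq_false, Bool.false_eq_true] <;> omega

lemma const_of_flips {k : ℕ} {S : Type*} (f : (Fin k → Bool) → S)
    (h : ∀ x i, f (Function.update x i (! x i)) = f x) :
    ∀ (n : ℕ) (u v : Fin k → Bool),
      (Finset.univ.filter fun i => u i ≠ v i).card = n → f u = f v := by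
  intro n
  induction n with
  | zero =>
    intro u v hc
    have : u = v := by
      funext i
      by_contra hi
      have : i ∈ Finset.univ.filter fun i => u i ≠ v i := by simp [hi]
      rw [Finset.card_eq_zero] at hc
      simp [hc] at this
    rw [this]
  | succ n ih =>
    intro u v hc
    have hne : (Finset.univ.filter fun i => u i ≠ v i).Nonempty := by
      rw [← Finset.card_pos, hc]; omega
    obtain ⟨i, hi⟩ := hne
    have hiuv : u i ≠ v i := by simpa using hi
    set u' := Function.update u i (v i) with hu'
    have h1 : f u' = f u := by
      have hv : v i = ! u i := by
        cases hui : u i <;> cases hvi : v i <;> simp_all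
      rw [hu', hv]; exact h u i
    have hfilter : (Finset.univ.filter fun j => u' j ≠ v j) =
        (Finset.univ.filter fun j => u j ≠ v j).erase i := by
      ext j
      by_cases hj : j = i <;> simp [hu', Function.update_apply, hj]
    have : f u' = f v := by
      apply ih
      rw [hfilter, Finset.card_erase_of_mem hi, hc]
      omega
    rw [← h1, this]

lemma exists_neighbor {k : ℕ} {S : Type*} (f : (Fin k → Bool) → S)
    (hf : ∃ u v : Fin k → Bool, f u ≠ f v) :
    ∃ (x : Fin k → Bool) (i : Fin k), f x ≠ f (Function.update x i (!(x i))) := by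
  by_contra h
  push_neg at h
  obtain ⟨u, v, huv⟩ := hf
  exact huv (const_of_flips f (fun x i => (h x i).symm) _ u v rfl)

-- existence of some FCIDC

lemma exists_fcidc {k : ℕ} {S : Type*} (f : (Fin k → Bool) → S) (t : ℕ) :
    ∃ r p, IsFCIDC f t r p := by
  classical
  set N := t + k + 1 with hN
  set e : (Fin k → Bool) ≃ Fin (2 ^ k) :=
    (Equiv.arrowCongr (Equiv.refl (Fin k)) finTwoEquiv.symm).trans finFunctionFinEquiv with he
  set v : (Fin k → Bool) → ℕ := fun x => (e x : ℕ) with hv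
  have hvlt : ∀ x, v x < 2 ^ k := fun x => (e x).isLt
  have hvinj : ∀ x y : Fin k → Bool, v x = v y → x = y := by
    intro x y hxy
    exact e.injective (Fin.ext hxy)
  set r := N * (2 ^ k - 1) with hr
  have hvle : ∀ x, N * v x ≤ r := by
    intro x
    exact Nat.mul_le_mul_left _ (by have := hvlt x; omega)
  set q : (Fin k → Bool) → List Bool :=
    fun x => List.replicate (N * v x) false ++ List.replicate (r - N * v x) true with hq
  have hqlen : ∀ x, (q x).length = r := by
    intro x
    simp only [hq, List.length_append, List.length_replicate]
    have := hvle x; omega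
  have hclen : ∀ x, (List.ofFn x ++ q x).length = k + r := by
    intro x
    simp [hqlen x]
  have hcf : ∀ x, (List.ofFn x ++ q x).count false ≤ k + N * v x := by
    intro x
    have h1 : (List.ofFn x).count false ≤ k := by
      have := List.count_le_length (a := false) (l := List.ofFn x)
      simpa using this
    simp only [hq, List.count_append, List.count_replicate]
    simp
    omega
  have hct : ∀ x, (List.ofFn x ++ q x).count true + N * v x ≤ k + r := by
    intro x
    have h1 : (List.ofFn x).count true ≤ k := by
      have := List.count_le_length (a := true) (l := List.ofFn x)
      simpa using this
    have h2 := hvle x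
    simp only [hq, List.count_append, List.count_replicate]
    simp
    omega
  have key : ∀ a b : Fin k → Bool, v a < v b →
      lcsLen (List.ofFn a ++ q a) (List.ofFn b ++ q b) + N ≤ 2 * k + r := by
    intro a b hab
    have h3 : N * v a + N ≤ N * v b := by
      have h := Nat.mul_le_mul_left N (show v a + 1 ≤ v b from hab)
      have h' : N * (v a + 1) = N * v a + N := by ring
      omega
    have hb := hvle b
    have hlcs : lcsLen (List.ofFn a ++ q a) (List.ofFn b ++ q b) ≤ 2 * k + r - N := by
      apply lcsLen_le
      intro z hza hzb
      have h1 : z.count false ≤ k + N * v a :=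
        le_trans (hza.count_le false) (hcf a)
      have h2 : z.count true + N * v b ≤ k + r := by
        have := hzb.count_le true
        have := hct b
        omega
      have h5 := bool_length_count z
      omega
    omega
  refine ⟨r, q, hqlen, ?_⟩
  intro x y hxy
  have hxyne : x ≠ y := fun h => hxy (h ▸ rfl)
  have hvne : v x ≠ v y := fun h => hxyne (hvinj _ _ h)
  unfold dID
  rw [hclen x, hclen y]
  rcases Nat.lt_or_ge (v x) (v y) with hlt | hge
  · have hk := key x y hlt
    omega
  · have hlt' : v y < v x := by omega
    have hk := key y x hlt'
    have hsymm : lcsLen (List.ofFn x ++ q x) (List.ofFn y ++ q y) + N ≤ 2 * k + r := by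
      have : lcsLen (List.ofFn x ++ q x) (List.ofFn y ++ q y) ≤
          lcsLen (List.ofFn y ++ q y) (List.ofFn x ++ q x) := by
        apply lcsLen_le
        intro z hzx hzy
        exact le_lcsLen hzy hzx
      omega
    omega

theorem stmt6 {S : Type*} (k t : ℕ) (ht : 1 ≤ t) (f : (Fin k → Bool) → S)
    (hf : ∃ u v : Fin k → Bool, f u ≠ f v) :
    t ≤ optRed f t := by
  have hne : {r | ∃ p, IsFCIDC f t r p}.Nonempty := by
    obtain ⟨r, p, hp⟩ := exists_fcidc f t
    exact ⟨r, p, hp⟩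
  apply le_csInf hne
  rintro r ⟨p, hlen, hdist⟩
  obtain ⟨x, i, hx⟩ := exists_neighbor f hf
  set y := Function.update x i (!(x i)) with hy
  -- common sublist of length k - 1
  set z := (List.ofFn x).eraseIdx i with hz
  have hzlen : z.length = k - 1 := by
    rw [hz, List.length_eraseIdx]
    simp [i.isLt]
  have hzx : z.Sublist (List.ofFn x) := List.eraseIdx_sublist _ _
  have heq : (List.ofFn x).eraseIdx i = (List.ofFn y).eraseIdx i := by
    apply List.ext_getElem
    · simp [List.length_eraseIdx, i.isLt]
    · intro j h1 h2
      simp only [List.getElem_eraseIdx, List.getElem_ofFn]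
      split <;>
      · rename_i hji
        exact (Function.update_of_ne (by simp only [ne_eq, Fin.ext_iff]; omega) _ _).symm
  have hzy : z.Sublist (List.ofFn y) := by
    rw [hz, heq]; exact List.eraseIdx_sublist _ _
  have hL : k - 1 ≤ lcsLen (List.ofFn x ++ p x) (List.ofFn y ++ p y) := by
    rw [← hzlen]
    exact le_lcsLen (hzx.trans (List.sublist_append_left _ _))
      (hzy.trans (List.sublist_append_left _ _))
  have hd := hdist x y hx
  have hlx : (List.ofFn x ++ p x).length = k + r := by simp [hlen]
  have hly : (List.ofFn y ++ p y).length = k + r := by simp [hlen]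
  unfold dID at hd
  rw [hlx, hly] at hd
  have hk1 : 0 < k := i.pos
  omega
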